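/- Let H be a finite nontrivial hypergraph (no empty edges, no universal vertices). Then 1/α(H̄) + 1/β(H*) = 1, where H̄ is the complement and H* the dual of H. -/

import Mathlib

private lemma stmt13_sum_eq {n m : ℕ} (hm : 0 < m) (mem : Fin n → Fin m → Bool)
    (T : Finset (Fin n)) :
    Finset.univ.sup (fun e : Fin m => (T.filter (fun v => ¬ mem v e)).card)
      + Finset.univ.inf' ⟨⟨0, hm⟩, Finset.mem_univ _⟩
          (fun e : Fin m => (T.filter (fun v => mem v e)).card)
      = T.card := by
  classical
  obtain ⟨e₀, -, heq⟩ := Finset.exists_mem_eq_inf'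
    (⟨⟨0, hm⟩, Finset.mem_univ _⟩ : (Finset.univ : Finset (Fin m)).Nonempty)
    (fun e : Fin m => (T.filter (fun v => mem v e)).card)
  have hkey : ∀ e : Fin m, (T.filter (fun v => mem v e)).card
      + (T.filter (fun v => ¬ mem v e)).card = T.card := fun e =>
    Finset.card_filter_add_card_filter_not (fun v => (mem v e : Prop))
  have hsup : Finset.univ.sup (fun e : Fin m => (T.filter (fun v => ¬ mem v e)).card)
      = (T.filter (fun v => ¬ mem v e₀)).card := by
    apply le_antisymm
    · apply Finset.sup_le
      intro e _
      have h1 := hkey e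
      have h2 := hkey e₀
      have h3 : (T.filter (fun v => mem v e₀)).card ≤ (T.filter (fun v => mem v e)).card := by
        rw [← heq]; exact Finset.inf'_le _ (Finset.mem_univ e)
      omega
    · exact Finset.le_sup (f := fun e : Fin m => (T.filter (fun v => ¬ mem v e)).card) (Finset.mem_univ e₀)
  rw [hsup, heq]
  have := hkey e₀
  omega

/-- For a nontrivial finite hypergraph `H` (no empty edge, no universal vertex):
`1/α(H̄) + 1/β(H*) = 1`, where `H̄` is the complement and `H*` the dual of `H`;
`α(H̄) = max {|S| / max_e |S ∖ e| : S ⊆ V}` and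
`β(H*) = min {|Z| / min_e |Z ∩ e| : Z ⊆ V}` (over sets with positive denominator). -/
theorem stmt13 {n m : ℕ} (hm : 0 < m) (mem : Fin n → Fin m → Bool)
    (hNoEmptyEdge : ∀ e : Fin m, ∃ v : Fin n, mem v e)
    (hNoUniversalVertex : ∀ v : Fin n, ∃ e : Fin m, ¬ mem v e)
    (a b : ℝ)
    (ha : IsGreatest {q : ℝ | ∃ S : Finset (Fin n),
        0 < Finset.univ.sup (fun e : Fin m => (S.filter (fun v => ¬ mem v e)).card) ∧
        q = (S.card : ℝ) /
          ((Finset.univ.sup (fun e : Fin m => (S.filter (fun v => ¬ mem v e)).card) : ℕ) : ℝ)} a)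
    (hb : IsLeast {q : ℝ | ∃ Z : Finset (Fin n),
        0 < Finset.univ.inf' ⟨⟨0, hm⟩, Finset.mem_univ _⟩
          (fun e : Fin m => (Z.filter (fun v => mem v e)).card) ∧
        q = (Z.card : ℝ) /
          ((Finset.univ.inf' ⟨⟨0, hm⟩, Finset.mem_univ _⟩
            (fun e : Fin m => (Z.filter (fun v => mem v e)).card) : ℕ) : ℝ)} b) :
    1 / a + 1 / b = 1 := by
  classical
  obtain ⟨⟨S₀, hDS₀, haeq⟩, haub⟩ := ha
  obtain ⟨⟨Z₀, hdZ₀, hbeq⟩, hblb⟩ := hb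
  -- abbreviations (as plain nats)
  set DS := Finset.univ.sup (fun e : Fin m => (S₀.filter (fun v => ¬ mem v e)).card) with hDSdef
  set dS := Finset.univ.inf' ⟨⟨0, hm⟩, Finset.mem_univ _⟩
      (fun e : Fin m => (S₀.filter (fun v => mem v e)).card) with hdSdef
  set DZ := Finset.univ.sup (fun e : Fin m => (Z₀.filter (fun v => ¬ mem v e)).card) with hDZdef
  set dZ := Finset.univ.inf' ⟨⟨0, hm⟩, Finset.mem_univ _⟩
      (fun e : Fin m => (Z₀.filter (fun v => mem v e)).card) with hdZdef
  have hsumS : DS + dS = S₀.card := stmt13_sum_eq hm mem S₀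
  have hsumZ : DZ + dZ = Z₀.card := stmt13_sum_eq hm mem Z₀
  -- the universe set shows a > 1
  have hsumU := stmt13_sum_eq hm mem (Finset.univ : Finset (Fin n))
  have hDU : 0 < Finset.univ.sup
      (fun e : Fin m => ((Finset.univ : Finset (Fin n)).filter (fun v => ¬ mem v e)).card) := by
    obtain ⟨v, hv⟩ := hNoEmptyEdge ⟨0, hm⟩
    obtain ⟨e', he'⟩ := hNoUniversalVertex v
    have h1 : 0 < ((Finset.univ : Finset (Fin n)).filter (fun v => ¬ mem v e')).card :=
      Finset.card_pos.mpr ⟨v, Finset.mem_filter.mpr ⟨Finset.mem_univ v, he'⟩⟩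
    exact lt_of_lt_of_le h1 (Finset.le_sup
      (f := fun e : Fin m => ((Finset.univ : Finset (Fin n)).filter (fun v => ¬ mem v e)).card)
      (Finset.mem_univ e'))
  have hdU : 0 < Finset.univ.inf' ⟨⟨0, hm⟩, Finset.mem_univ _⟩
      (fun e : Fin m => ((Finset.univ : Finset (Fin n)).filter (fun v => mem v e)).card) := by
    apply (Finset.lt_inf'_iff _).mpr
    intro e _
    obtain ⟨v, hv⟩ := hNoEmptyEdge e
    exact Finset.card_pos.mpr ⟨v, Finset.mem_filter.mpr ⟨Finset.mem_univ v, hv⟩⟩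
  have ha1 : (1 : ℝ) < a := by
    have hmem : ((Finset.univ : Finset (Fin n)).card : ℝ) / ((Finset.univ.sup
        (fun e : Fin m => ((Finset.univ : Finset (Fin n)).filter (fun v => ¬ mem v e)).card) : ℕ) : ℝ)
        ∈ {q : ℝ | ∃ S : Finset (Fin n),
        0 < Finset.univ.sup (fun e : Fin m => (S.filter (fun v => ¬ mem v e)).card) ∧
        q = (S.card : ℝ) /
          ((Finset.univ.sup (fun e : Fin m => (S.filter (fun v => ¬ mem v e)).card) : ℕ) : ℝ)} :=
      ⟨Finset.univ, hDU, rfl⟩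
    have hlt : (1 : ℝ) < ((Finset.univ : Finset (Fin n)).card : ℝ) / ((Finset.univ.sup
        (fun e : Fin m => ((Finset.univ : Finset (Fin n)).filter (fun v => ¬ mem v e)).card) : ℕ) : ℝ) := by
      rw [lt_div_iff₀ (by exact_mod_cast hDU)]
      have : Finset.univ.sup
          (fun e : Fin m => ((Finset.univ : Finset (Fin n)).filter (fun v => ¬ mem v e)).card)
          < (Finset.univ : Finset (Fin n)).card := by omega
      exact_mod_cast by simpa using this
    exact lt_of_lt_of_le hlt (haub hmem)
  -- dS > 0 : otherwise a = 1
  have hdS : 0 < dS := by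
    by_contra h
    have hdS0 : dS = 0 := by omega
    have hcard : DS = S₀.card := by omega
    have : a = 1 := by
      rw [haeq, hcard, div_self]
      exact_mod_cast (by omega : S₀.card ≠ 0)
    linarith
  have hZcard : 0 < Z₀.card := by
    have h1 : dZ ≤ (Z₀.filter (fun v => mem v ⟨0, hm⟩)).card :=
      Finset.inf'_le _ (Finset.mem_univ _)
    have h2 : (Z₀.filter (fun v => mem v ⟨0, hm⟩)).card ≤ Z₀.card := Finset.card_filter_le _ _
    omega
  have hDZ : 0 < DZ := by
    obtain ⟨v, hv⟩ := Finset.card_pos.mp hZcard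
    obtain ⟨e', he'⟩ := hNoUniversalVertex v
    have h1 : 0 < (Z₀.filter (fun v => ¬ mem v e')).card :=
      Finset.card_pos.mpr ⟨v, Finset.mem_filter.mpr ⟨hv, he'⟩⟩
    exact lt_of_lt_of_le h1 (Finset.le_sup
      (f := fun e : Fin m => (Z₀.filter (fun v => ¬ mem v e)).card) (Finset.mem_univ e'))
  have hbS : b ≤ (S₀.card : ℝ) / (dS : ℝ) := hblb ⟨S₀, hdS, rfl⟩
  have haZ : (Z₀.card : ℝ) / (DZ : ℝ) ≤ a := haub ⟨Z₀, hDZ, rfl⟩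
  have hpR : (0:ℝ) < (S₀.card:ℝ) := by exact_mod_cast (by omega : 0 < S₀.card)
  have hqR : (0:ℝ) < (Z₀.card:ℝ) := by exact_mod_cast hZcard
  have hDSR : (0:ℝ) < (DS:ℝ) := by exact_mod_cast hDS₀
  have hdSR : (0:ℝ) < (dS:ℝ) := by exact_mod_cast hdS
  have hDZR : (0:ℝ) < (DZ:ℝ) := by exact_mod_cast hDZ
  have hdZR : (0:ℝ) < (dZ:ℝ) := by exact_mod_cast hdZ₀
  have h1 : (Z₀.card:ℝ) * dS ≤ (S₀.card:ℝ) * dZ := by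
    have h := hbS
    rw [hbeq] at h
    exact (div_le_div_iff₀ hdZR hdSR).mp h
  have h2 : (Z₀.card:ℝ) * DS ≤ (S₀.card:ℝ) * DZ := by
    have h := haZ
    rw [haeq] at h
    exact (div_le_div_iff₀ hDZR hDSR).mp h
  have hsS : (DS:ℝ) + dS = S₀.card := by exact_mod_cast hsumS
  have hsZ : (DZ:ℝ) + dZ = Z₀.card := by exact_mod_cast hsumZ
  have e1 : (S₀.card:ℝ) * DZ = S₀.card * Z₀.card - S₀.card * dZ := by rw [← hsZ]; ring
  have e2 : (Z₀.card:ℝ) * dS = Z₀.card * S₀.card - Z₀.card * DS := by rw [← hsS]; ring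
  rw [haeq, hbeq, one_div_div, one_div_div,
    div_add_div _ _ (ne_of_gt hpR) (ne_of_gt hqR),
    div_eq_one_iff_eq (ne_of_gt (mul_pos hpR hqR))]
  nlinarith [h1, h2, e1, e2]
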